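/- Let θ ∈ (0, π/2) and let u be a model eigenfunction of H(θ) with eigenvalue σ. Then ∫_{ℝ²₊} V_θ ∂_s u · u ds dt = (sin θ)/2 and ∫_{ℝ²₊} V_θ ∂_s² u · u ds dt = 0. -/

import Mathlib

open Real MeasureTheory Set

noncomputable section

/-- Partial derivative with respect to the first variable. -/
def pd1 (u : ℝ → ℝ → ℝ) : ℝ → ℝ → ℝ := fun s t => deriv (fun x => u x t) s

/-- Partial derivative with respect to the second variable. -/
def pd2 (u : ℝ → ℝ → ℝ) : ℝ → ℝ → ℝ := fun s t => deriv (fun y => u s y) t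

/-- The potential `V_θ(s,t) = t cos θ − s sin θ`. -/
def Vpot (θ : ℝ) : ℝ → ℝ → ℝ := fun s t => t * Real.cos θ - s * Real.sin θ

/-- The operator `H(θ) = −∂_s² − ∂_t² + V_θ²` applied to `u`. -/
def Hop (θ : ℝ) (u : ℝ → ℝ → ℝ) : ℝ → ℝ → ℝ :=
  fun s t => - pd1 (pd1 u) s t - pd2 (pd2 u) s t + (Vpot θ s t)^2 * u s t

/-- Integral over the half-plane `{t > 0}` with respect to `ds dt`. -/
def intHalf (f : ℝ → ℝ → ℝ) : ℝ := ∫ s : ℝ, ∫ t in Set.Ioi (0:ℝ), f s t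

/-- Schwartz-class on the closed half-plane: all iterated partial derivatives decay
faster than any power of `|s| + t`. -/
def SchwartzHalf (u : ℝ → ℝ → ℝ) : Prop :=
  ∀ k l n : ℕ, ∃ C : ℝ, ∀ s t : ℝ, 0 ≤ t →
    |pd1^[k] (pd2^[l] u) s t| ≤ C * (1 + |s| + t) ^ (-(n:ℝ))

/-- A model eigenfunction of `H(θ)` with eigenvalue `σ`: smooth up to the boundary,
Schwartz-class, `L²`-normalized, Neumann boundary condition, and `H(θ)u = σu` on `{t ≥ 0}`. -/
structure IsModelEigen (θ : ℝ) (u : ℝ → ℝ → ℝ) (σ : ℝ) : Prop where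
  smooth : ∀ n : ℕ, ContDiff ℝ n (fun p : ℝ × ℝ => u p.1 p.2)
  schwartz : SchwartzHalf u
  normalized : intHalf (fun s t => (u s t)^2) = 1
  neumann : ∀ s : ℝ, pd2 u s 0 = 0
  eigen : ∀ s t : ℝ, 0 ≤ t → Hop θ u s t = σ * u s t


open Filter Function Topology
open scoped ContDiff

/-- joint smoothness -/
def Sm (v : ℝ → ℝ → ℝ) : Prop := ContDiff ℝ ∞ (Function.uncurry v)

lemma smCont {v : ℝ → ℝ → ℝ} (hv : Sm v) : Continuous (Function.uncurry v) :=
  hv.continuous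

lemma hasDerivAt_pd1 {v : ℝ → ℝ → ℝ} (hv : Sm v) (s t : ℝ) :
    HasDerivAt (fun x => v x t) (pd1 v s t) s := by
  have hd : DifferentiableAt ℝ (fun x => v x t) s := by
    have h1 : DifferentiableAt ℝ (Function.uncurry v) (s, t) :=
      hv.differentiable (by simp) (s, t)
    exact h1.comp s (differentiableAt_id.prodMk (differentiableAt_const t) : DifferentiableAt ℝ (fun x : ℝ => (x, t)) s)
  exact hd.hasDerivAt

lemma hasDerivAt_pd2 {v : ℝ → ℝ → ℝ} (hv : Sm v) (s t : ℝ) :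
    HasDerivAt (fun y => v s y) (pd2 v s t) t := by
  have hd : DifferentiableAt ℝ (fun y => v s y) t := by
    have h1 : DifferentiableAt ℝ (Function.uncurry v) (s, t) :=
      hv.differentiable (by simp) (s, t)
    exact h1.comp t ((differentiableAt_const s).prodMk differentiableAt_id : DifferentiableAt ℝ (fun y : ℝ => (s, y)) t)
  exact hd.hasDerivAt

lemma pd1_eq_fderiv {v : ℝ → ℝ → ℝ} (hv : Sm v) (s t : ℝ) :
    pd1 v s t = fderiv ℝ (Function.uncurry v) (s, t) (1, 0) := by
  have hF : HasFDerivAt (Function.uncurry v) (fderiv ℝ (Function.uncurry v) (s, t)) (s, t) :=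
    (hv.differentiable (by simp) (s, t)).hasFDerivAt
  have hγ : HasDerivAt (fun x : ℝ => (x, t)) ((1 : ℝ), (0 : ℝ)) s :=
    (hasDerivAt_id s).prodMk (hasDerivAt_const s t)
  exact (hF.comp_hasDerivAt s hγ).deriv

lemma pd2_eq_fderiv {v : ℝ → ℝ → ℝ} (hv : Sm v) (s t : ℝ) :
    pd2 v s t = fderiv ℝ (Function.uncurry v) (s, t) (0, 1) := by
  have hF : HasFDerivAt (Function.uncurry v) (fderiv ℝ (Function.uncurry v) (s, t)) (s, t) :=
    (hv.differentiable (by simp) (s, t)).hasFDerivAt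
  have hγ : HasDerivAt (fun y : ℝ => (s, y)) ((0 : ℝ), (1 : ℝ)) t :=
    (hasDerivAt_const t s).prodMk (hasDerivAt_id t)
  exact (hF.comp_hasDerivAt t hγ).deriv

lemma smPd1 {v : ℝ → ℝ → ℝ} (hv : Sm v) : Sm (pd1 v) := by
  have h : Function.uncurry (pd1 v) = fun p : ℝ × ℝ => fderiv ℝ (Function.uncurry v) p (1, 0) := by
    funext p
    exact pd1_eq_fderiv hv p.1 p.2
  rw [Sm, h]
  exact (hv.fderiv_right (by exact_mod_cast le_top)).clm_apply contDiff_const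

lemma smPd2 {v : ℝ → ℝ → ℝ} (hv : Sm v) : Sm (pd2 v) := by
  have h : Function.uncurry (pd2 v) = fun p : ℝ × ℝ => fderiv ℝ (Function.uncurry v) p (0, 1) := by
    funext p
    exact pd2_eq_fderiv hv p.1 p.2
  rw [Sm, h]
  exact (hv.fderiv_right (by exact_mod_cast le_top)).clm_apply contDiff_const

lemma pdComm {v : ℝ → ℝ → ℝ} (hv : Sm v) : pd1 (pd2 v) = pd2 (pd1 v) := by
  funext s t
  have hdiff : Differentiable ℝ (Function.uncurry v) := hv.differentiable (by simp)
  have h1 : ∀ y, HasFDerivAt (Function.uncurry v) (fderiv ℝ (Function.uncurry v) y) y :=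
    fun y => (hdiff y).hasFDerivAt
  have hf' : ContDiff ℝ ∞ (fderiv ℝ (Function.uncurry v)) :=
    hv.fderiv_right (by exact_mod_cast le_top)
  have hd1 : DifferentiableAt ℝ (fderiv ℝ (Function.uncurry v)) (s, t) :=
    hf'.differentiable (by simp) (s, t)
  have h2 : HasFDerivAt (fderiv ℝ (Function.uncurry v))
      (fderiv ℝ (fderiv ℝ (Function.uncurry v)) (s, t)) (s, t) := hd1.hasFDerivAt
  have hsymm := second_derivative_symmetric h1 h2 (1, 0) (0, 1)
  have e1 : Function.uncurry (pd2 v) = fun p : ℝ × ℝ => fderiv ℝ (Function.uncurry v) p (0, 1) := by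
    funext p; exact pd2_eq_fderiv hv p.1 p.2
  have e2 : Function.uncurry (pd1 v) = fun p : ℝ × ℝ => fderiv ℝ (Function.uncurry v) p (1, 0) := by
    funext p; exact pd1_eq_fderiv hv p.1 p.2
  have key1 : pd1 (pd2 v) s t = fderiv ℝ (fderiv ℝ (Function.uncurry v)) (s, t) (1, 0) (0, 1) := by
    rw [pd1_eq_fderiv (smPd2 hv) s t, e1]
    rw [fderiv_clm_apply hd1 (differentiableAt_const _)]
    simp
  have key2 : pd2 (pd1 v) s t = fderiv ℝ (fderiv ℝ (Function.uncurry v)) (s, t) (0, 1) (1, 0) := by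
    rw [pd2_eq_fderiv (smPd1 hv) s t, e2]
    rw [fderiv_clm_apply hd1 (differentiableAt_const _)]
    simp
  rw [key1, key2, hsymm]

/-- polynomial decay of all orders on the closed upper half plane -/
def Decay (f : ℝ → ℝ → ℝ) : Prop :=
  ∀ n : ℕ, ∃ C : ℝ, ∀ s t : ℝ, 0 ≤ t → |f s t| ≤ C / (1 + |s| + t) ^ n

lemma one_le_base (s t : ℝ) (ht : 0 ≤ t) : 1 ≤ 1 + |s| + t := by
  have := abs_nonneg s; linarith

lemma base_pos (s t : ℝ) (ht : 0 ≤ t) : 0 < 1 + |s| + t := by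
  have := abs_nonneg s; linarith

lemma Decay.bound {f : ℝ → ℝ → ℝ} (hf : Decay f) (n : ℕ) :
    ∃ C : ℝ, 0 ≤ C ∧ ∀ s t : ℝ, 0 ≤ t → |f s t| ≤ C / (1 + |s| + t) ^ n := by
  obtain ⟨C, hC⟩ := hf n
  refine ⟨|C|, abs_nonneg C, fun s t ht => (hC s t ht).trans ?_⟩
  gcongr
  exact le_abs_self C

lemma Decay.mul {f g : ℝ → ℝ → ℝ} (hf : Decay f) (hg : Decay g) :
    Decay (fun s t => f s t * g s t) := by
  intro n
  obtain ⟨C, hC0, hC⟩ := hf.bound n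
  obtain ⟨D, hD0, hD⟩ := hg.bound 0
  refine ⟨C * D, fun s t ht => ?_⟩
  have h1 := hC s t ht
  have h2 := hD s t ht
  simp only [pow_zero, div_one] at h2
  rw [abs_mul]
  calc |f s t| * |g s t| ≤ (C / (1 + |s| + t) ^ n) * D := by
        exact mul_le_mul h1 h2 (abs_nonneg _) (by positivity)
    _ = C * D / (1 + |s| + t) ^ n := by ring

lemma Decay.const_mul {f : ℝ → ℝ → ℝ} (hf : Decay f) (c : ℝ) :
    Decay (fun s t => c * f s t) := by
  intro n
  obtain ⟨C, hC0, hC⟩ := hf.bound n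
  refine ⟨|c| * C, fun s t ht => ?_⟩
  rw [abs_mul, mul_div_assoc]
  exact mul_le_mul_of_nonneg_left (hC s t ht) (abs_nonneg c)

lemma Decay.V_mul {f : ℝ → ℝ → ℝ} (hf : Decay f) (θ : ℝ) :
    Decay (fun s t => Vpot θ s t * f s t) := by
  intro n
  obtain ⟨C, hC0, hC⟩ := hf.bound (n + 1)
  refine ⟨C, fun s t ht => ?_⟩
  rw [abs_mul]
  have hV : |Vpot θ s t| ≤ 1 + |s| + t := by
    have h1 : |Vpot θ s t| ≤ t * |Real.cos θ| + |s| * |Real.sin θ| := by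
      rw [Vpot]
      refine (abs_sub _ _).trans ?_
      rw [abs_mul, abs_mul, abs_of_nonneg ht]
    have h2 : t * |Real.cos θ| ≤ t := by
      nlinarith [abs_cos_le_one θ, abs_nonneg (Real.cos θ)]
    have h3 : |s| * |Real.sin θ| ≤ |s| := by
      nlinarith [abs_sin_le_one θ, abs_nonneg (Real.sin θ), abs_nonneg s]
    linarith
  calc |Vpot θ s t| * |f s t| ≤ (1 + |s| + t) * (C / (1 + |s| + t) ^ (n + 1)) := by
        exact mul_le_mul hV (hC s t ht) (abs_nonneg _) (by positivity)
    _ = C / (1 + |s| + t) ^ n := by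
        rw [pow_succ]
        field_simp

lemma decay_slice_s {f : ℝ → ℝ → ℝ} (hf : Decay f) (hc : Continuous (Function.uncurry f))
    {t : ℝ} (ht : 0 ≤ t) : Integrable (fun s => f s t) := by
  obtain ⟨C, hC0, hC⟩ := hf.bound 2
  refine (integrable_inv_one_add_sq.const_mul C).mono' ?_ ?_
  · exact (hc.comp (continuous_id.prodMk continuous_const)).aestronglyMeasurable
  · refine Eventually.of_forall fun s => ?_
    have h1 := hC s t ht
    have h2 : (1 : ℝ) + s ^ 2 ≤ (1 + |s| + t) ^ 2 := by
      nlinarith [abs_nonneg s, sq_abs s, ht]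
    have h3 : (0 : ℝ) < 1 + s ^ 2 := by positivity
    calc ‖f s t‖ = |f s t| := rfl
      _ ≤ C / (1 + |s| + t) ^ 2 := h1
      _ ≤ C / (1 + s ^ 2) := div_le_div_of_nonneg_left hC0 h3 h2
      _ = C * (1 + s ^ 2)⁻¹ := by rw [div_eq_mul_inv]

lemma decay_slice_t {f : ℝ → ℝ → ℝ} (hf : Decay f) (hc : Continuous (Function.uncurry f))
    (s : ℝ) : IntegrableOn (fun t => f s t) (Ioi (0 : ℝ)) := by
  obtain ⟨C, hC0, hC⟩ := hf.bound 2
  refine ((integrable_inv_one_add_sq.const_mul C).restrict (s := Ioi 0)).mono' ?_ ?_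
  · exact (hc.comp (continuous_const.prodMk continuous_id)).aestronglyMeasurable.restrict
  · filter_upwards [ae_restrict_mem measurableSet_Ioi] with t htt
    have ht : (0:ℝ) ≤ t := le_of_lt htt
    have h1 := hC s t ht
    have h2 : (1 : ℝ) + t ^ 2 ≤ (1 + |s| + t) ^ 2 := by
      nlinarith [abs_nonneg s, ht]
    have h3 : (0 : ℝ) < 1 + t ^ 2 := by positivity
    calc ‖f s t‖ = |f s t| := rfl
      _ ≤ C / (1 + |s| + t) ^ 2 := h1
      _ ≤ C / (1 + t ^ 2) := div_le_div_of_nonneg_left hC0 h3 h2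
      _ = C * (1 + t ^ 2)⁻¹ := by rw [div_eq_mul_inv]

lemma decay_integrable_prod {f : ℝ → ℝ → ℝ} (hf : Decay f) (hc : Continuous (Function.uncurry f)) :
    Integrable (Function.uncurry f) (volume.prod (volume.restrict (Ioi (0:ℝ)))) := by
  obtain ⟨C, hC0, hC⟩ := hf.bound 4
  have hG : Integrable (fun z : ℝ × ℝ => (C * (1 + z.1 ^ 2)⁻¹) * (1 + z.2 ^ 2)⁻¹)
      (volume.prod (volume.restrict (Ioi (0:ℝ)))) :=
    (integrable_inv_one_add_sq.const_mul C).mul_prod integrable_inv_one_add_sq.restrict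
  have hae : ∀ᵐ z : ℝ × ℝ ∂(volume.prod (volume.restrict (Ioi (0:ℝ)))), 0 < z.2 := by
    rw [ae_iff]
    have hset : {z : ℝ × ℝ | ¬ 0 < z.2} = (univ : Set ℝ) ×ˢ {t : ℝ | ¬ 0 < t} := by
      ext z; simp
    rw [hset, Measure.prod_prod]
    have h0 : (volume.restrict (Ioi (0:ℝ))) {t : ℝ | ¬ 0 < t} = 0 := by
      rw [Measure.restrict_apply' measurableSet_Ioi]
      have he : {t : ℝ | ¬ 0 < t} ∩ Ioi 0 = (∅ : Set ℝ) := by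
        ext t
        simp only [mem_inter_iff, mem_setOf_eq, mem_Ioi, mem_empty_iff_false, iff_false]
        tauto
      rw [he]
      exact measure_empty
    rw [h0, mul_zero]
  refine hG.mono' hc.aestronglyMeasurable ?_
  filter_upwards [hae] with z hz
  have ht : (0:ℝ) ≤ z.2 := le_of_lt hz
  have h1 := hC z.1 z.2 ht
  have h2 : (1 + z.1 ^ 2) * (1 + z.2 ^ 2) ≤ (1 + |z.1| + z.2) ^ 4 := by
    have e1 : 1 + z.1 ^ 2 ≤ (1 + |z.1|) ^ 2 := by nlinarith [abs_nonneg z.1, sq_abs z.1]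
    have e2 : 1 + z.2 ^ 2 ≤ (1 + z.2) ^ 2 := by nlinarith
    have e3 : (1 + |z.1|) * (1 + z.2) ≤ (1 + |z.1| + z.2) ^ 2 := by
      nlinarith [abs_nonneg z.1]
    calc (1 + z.1 ^ 2) * (1 + z.2 ^ 2) ≤ ((1 + |z.1|) ^ 2) * ((1 + z.2) ^ 2) := by
          apply mul_le_mul e1 e2 (by positivity) (by positivity)
      _ = ((1 + |z.1|) * (1 + z.2)) ^ 2 := by ring
      _ ≤ ((1 + |z.1| + z.2) ^ 2) ^ 2 := by
          apply pow_le_pow_left₀ (by positivity) e3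
      _ = (1 + |z.1| + z.2) ^ 4 := by ring
  have h3 : (0:ℝ) < (1 + z.1 ^ 2) * (1 + z.2 ^ 2) := by positivity
  calc ‖Function.uncurry f z‖ = |f z.1 z.2| := rfl
    _ ≤ C / (1 + |z.1| + z.2) ^ 4 := h1
    _ ≤ C / ((1 + z.1 ^ 2) * (1 + z.2 ^ 2)) := div_le_div_of_nonneg_left hC0 h3 h2
    _ = C * (1 + z.1 ^ 2)⁻¹ * (1 + z.2 ^ 2)⁻¹ := by
        rw [div_eq_mul_inv, mul_inv]; ring

lemma swap_intHalf {f : ℝ → ℝ → ℝ} (hf : Decay f) (hc : Continuous (Function.uncurry f)) :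
    intHalf f = ∫ t in Ioi (0:ℝ), ∫ s : ℝ, f s t := by
  exact integral_integral_swap (decay_integrable_prod hf hc)

lemma decay_tendsto_s_top {f : ℝ → ℝ → ℝ} (hf : Decay f) {t : ℝ} (ht : 0 ≤ t) :
    Tendsto (fun s => f s t) atTop (𝓝 0) := by
  obtain ⟨C, hC0, hC⟩ := hf.bound 1
  have hb : Tendsto (fun s : ℝ => 1 + |s| + t) atTop atTop := by
    apply tendsto_atTop_add_const_right
    exact tendsto_atTop_add_const_left _ _ tendsto_abs_atTop_atTop
  have h2 : Tendsto (fun s : ℝ => C * (1 + |s| + t)⁻¹) atTop (𝓝 (C * 0)) :=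
    (hb.inv_tendsto_atTop).const_mul C
  rw [mul_zero] at h2
  refine squeeze_zero_norm (fun s => ?_) h2
  have := hC s t ht
  rw [pow_one] at this
  simpa [div_eq_mul_inv] using this

lemma decay_tendsto_s_bot {f : ℝ → ℝ → ℝ} (hf : Decay f) {t : ℝ} (ht : 0 ≤ t) :
    Tendsto (fun s => f s t) atBot (𝓝 0) := by
  obtain ⟨C, hC0, hC⟩ := hf.bound 1
  have hb : Tendsto (fun s : ℝ => 1 + |s| + t) atBot atTop := by
    apply tendsto_atTop_add_const_right
    exact tendsto_atTop_add_const_left _ _ tendsto_abs_atBot_atTop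
  have h2 : Tendsto (fun s : ℝ => C * (1 + |s| + t)⁻¹) atBot (𝓝 (C * 0)) :=
    (hb.inv_tendsto_atTop).const_mul C
  rw [mul_zero] at h2
  refine squeeze_zero_norm (fun s => ?_) h2
  have := hC s t ht
  rw [pow_one] at this
  simpa [div_eq_mul_inv] using this

lemma decay_tendsto_t_top {f : ℝ → ℝ → ℝ} (hf : Decay f) (s : ℝ) :
    Tendsto (fun t => f s t) atTop (𝓝 0) := by
  obtain ⟨C, hC0, hC⟩ := hf.bound 1
  have hb : Tendsto (fun t : ℝ => 1 + |s| + t) atTop atTop :=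
    tendsto_atTop_add_const_left _ _ tendsto_id
  have h2 : Tendsto (fun t : ℝ => C * (1 + |s| + t)⁻¹) atTop (𝓝 (C * 0)) :=
    (hb.inv_tendsto_atTop).const_mul C
  rw [mul_zero] at h2
  apply squeeze_zero_norm' ?_ h2
  filter_upwards [eventually_ge_atTop (0:ℝ)] with t ht
  have := hC s t ht
  rw [pow_one] at this
  simpa [div_eq_mul_inv] using this

/-- integral over ℝ of a derivative of a function vanishing at ±∞ -/
lemma integral_deriv_eq_zero {F f : ℝ → ℝ} (hd : ∀ x, HasDerivAt F (f x) x)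
    (hi : Integrable f) (htop : Tendsto F atTop (𝓝 0)) (hbot : Tendsto F atBot (𝓝 0)) :
    ∫ x, f x = 0 := by
  have h1 : ∫ x in Ioi (0:ℝ), f x = 0 - F 0 :=
    integral_Ioi_of_hasDerivAt_of_tendsto' (fun x _ => hd x) hi.integrableOn htop
  have h2 : ∫ x in Iic (0:ℝ), f x = F 0 - 0 :=
    integral_Iic_of_hasDerivAt_of_tendsto' (fun x _ => hd x) hi.integrableOn hbot
  rw [← intervalIntegral.integral_Iic_add_Ioi (b := (0:ℝ)) hi.integrableOn hi.integrableOn, h1, h2]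
  ring

/-- integral over (0,∞) of a derivative of a function vanishing at ∞ -/
lemma integral_deriv_Ioi {F f : ℝ → ℝ} (hd : ∀ x, HasDerivAt F (f x) x)
    (hi : IntegrableOn f (Ioi (0:ℝ))) (htop : Tendsto F atTop (𝓝 0)) :
    ∫ x in Ioi (0:ℝ), f x = - F 0 := by
  have h1 : ∫ x in Ioi (0:ℝ), f x = 0 - F 0 :=
    integral_Ioi_of_hasDerivAt_of_tendsto' (fun x _ => hd x) hi htop
  rw [h1]; ring

lemma contV (θ : ℝ) : Continuous (Function.uncurry (Vpot θ)) := by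
  have h : Function.uncurry (Vpot θ) = fun p : ℝ × ℝ => p.2 * Real.cos θ - p.1 * Real.sin θ := rfl
  rw [h]
  exact (continuous_snd.mul continuous_const).sub (continuous_fst.mul continuous_const)

lemma hasDerivAt_V (θ t s : ℝ) : HasDerivAt (fun x => Vpot θ x t) (-Real.sin θ) s := by
  have h : HasDerivAt (fun x : ℝ => t * Real.cos θ - x * Real.sin θ) (0 - 1 * Real.sin θ) s :=
    (hasDerivAt_const s _).sub ((hasDerivAt_id s).mul_const _)
  have h2 : (fun x => Vpot θ x t) = fun x : ℝ => t * Real.cos θ - x * Real.sin θ := rfl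
  rw [h2]
  simpa using h

lemma intCongr {α : Type*} [MeasurableSpace α] (μ : Measure α) {f g : α → ℝ}
    (h : ∀ x, f x = g x) : ∫ x, f x ∂μ = ∫ x, g x ∂μ :=
  congrArg (fun F => ∫ x, F x ∂μ) (funext h)

/-- IBP in `s` for a pure square. -/
lemma slice_sq {f : ℝ → ℝ → ℝ} (hf : Sm f) (df : Decay f) (df1 : Decay (pd1 f))
    {t : ℝ} (ht : 0 ≤ t) : ∫ s : ℝ, pd1 f s t * f s t = 0 := by
  have hd : ∀ s : ℝ, HasDerivAt (fun x => f x t * f x t)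
      (pd1 f s t * f s t + f s t * pd1 f s t) s :=
    fun s => (hasDerivAt_pd1 hf s t).mul (hasDerivAt_pd1 hf s t)
  have ha : Integrable (fun s => pd1 f s t * f s t) :=
    decay_slice_s (df1.mul df) (by exact (smCont (smPd1 hf)).mul (smCont hf)) ht
  have hb : Integrable (fun s => f s t * pd1 f s t) :=
    decay_slice_s (df.mul df1) (by exact (smCont hf).mul (smCont (smPd1 hf))) ht
  have hzero := integral_deriv_eq_zero hd (ha.add hb)
    (decay_tendsto_s_top (df.mul df) ht) (decay_tendsto_s_bot (df.mul df) ht)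
  rw [integral_add ha hb] at hzero
  have hcomm : ∫ s : ℝ, f s t * pd1 f s t = ∫ s : ℝ, pd1 f s t * f s t :=
    intCongr _ (fun s => mul_comm _ _)
  linarith

/-- IBP in `s` with weight `V`. -/
lemma slice_V {θ : ℝ} {f g : ℝ → ℝ → ℝ} (hf : Sm f) (hg : Sm g)
    (df : Decay f) (dg : Decay g) (df1 : Decay (pd1 f)) (dg1 : Decay (pd1 g))
    {t : ℝ} (ht : 0 ≤ t) :
    ∫ s : ℝ, Vpot θ s t * (pd1 f s t * g s t) =
      Real.sin θ * (∫ s : ℝ, f s t * g s t) - ∫ s : ℝ, Vpot θ s t * (f s t * pd1 g s t) := by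
  have hd : ∀ s : ℝ, HasDerivAt (fun x => Vpot θ x t * (f x t * g x t))
      (-Real.sin θ * (f s t * g s t) + (Vpot θ s t * (pd1 f s t * g s t) +
        Vpot θ s t * (f s t * pd1 g s t))) s := by
    intro s
    have hfg : HasDerivAt (fun x => f x t * g x t)
        (pd1 f s t * g s t + f s t * pd1 g s t) s :=
      (hasDerivAt_pd1 hf s t).mul (hasDerivAt_pd1 hg s t)
    have h : HasDerivAt (fun x => Vpot θ x t * (f x t * g x t)) _ s := (hasDerivAt_V θ t s).mul hfg
    convert h using 1
    ring
  have ha : Integrable (fun s => -Real.sin θ * (f s t * g s t)) :=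
    decay_slice_s ((df.mul dg).const_mul (-Real.sin θ))
      (by exact continuous_const.mul ((smCont hf).mul (smCont hg))) ht
  have hb : Integrable (fun s => Vpot θ s t * (pd1 f s t * g s t)) :=
    decay_slice_s ((df1.mul dg).V_mul θ)
      (by exact (contV θ).mul ((smCont (smPd1 hf)).mul (smCont hg))) ht
  have hc : Integrable (fun s => Vpot θ s t * (f s t * pd1 g s t)) :=
    decay_slice_s ((df.mul dg1).V_mul θ)
      (by exact (contV θ).mul ((smCont hf).mul (smCont (smPd1 hg)))) ht
  have hbc : Integrable (fun s => Vpot θ s t * (pd1 f s t * g s t) +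
      Vpot θ s t * (f s t * pd1 g s t)) := hb.add hc
  have hzero := integral_deriv_eq_zero hd (ha.add hbc)
    (decay_tendsto_s_top ((df.mul dg).V_mul θ) ht)
    (decay_tendsto_s_bot ((df.mul dg).V_mul θ) ht)
  rw [integral_add ha hbc, integral_add hb hc, integral_const_mul] at hzero
  linear_combination hzero

/-- IBP in `s` with weight `V²`. -/
lemma slice_V2 {θ : ℝ} {f g : ℝ → ℝ → ℝ} (hf : Sm f) (hg : Sm g)
    (df : Decay f) (dg : Decay g) (df1 : Decay (pd1 f)) (dg1 : Decay (pd1 g))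
    {t : ℝ} (ht : 0 ≤ t) :
    ∫ s : ℝ, Vpot θ s t * (Vpot θ s t * (pd1 f s t * g s t)) =
      2 * Real.sin θ * (∫ s : ℝ, Vpot θ s t * (f s t * g s t))
        - ∫ s : ℝ, Vpot θ s t * (Vpot θ s t * (f s t * pd1 g s t)) := by
  have hd : ∀ s : ℝ, HasDerivAt (fun x => Vpot θ x t * (Vpot θ x t * (f x t * g x t)))
      ((-2 * Real.sin θ) * (Vpot θ s t * (f s t * g s t)) +
        (Vpot θ s t * (Vpot θ s t * (pd1 f s t * g s t)) +
         Vpot θ s t * (Vpot θ s t * (f s t * pd1 g s t)))) s := by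
    intro s
    have hfg : HasDerivAt (fun x => f x t * g x t)
        (pd1 f s t * g s t + f s t * pd1 g s t) s :=
      (hasDerivAt_pd1 hf s t).mul (hasDerivAt_pd1 hg s t)
    have h : HasDerivAt (fun x => Vpot θ x t * (Vpot θ x t * (f x t * g x t))) _ s :=
      (hasDerivAt_V θ t s).mul ((hasDerivAt_V θ t s).mul hfg)
    convert h using 1
    ring
  have ha : Integrable (fun s => (-2 * Real.sin θ) * (Vpot θ s t * (f s t * g s t))) :=
    decay_slice_s (((df.mul dg).V_mul θ).const_mul (-2 * Real.sin θ))
      (by exact continuous_const.mul ((contV θ).mul ((smCont hf).mul (smCont hg)))) ht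
  have hb : Integrable (fun s => Vpot θ s t * (Vpot θ s t * (pd1 f s t * g s t))) :=
    decay_slice_s (((df1.mul dg).V_mul θ).V_mul θ)
      (by exact (contV θ).mul ((contV θ).mul ((smCont (smPd1 hf)).mul (smCont hg)))) ht
  have hc : Integrable (fun s => Vpot θ s t * (Vpot θ s t * (f s t * pd1 g s t))) :=
    decay_slice_s (((df.mul dg1).V_mul θ).V_mul θ)
      (by exact (contV θ).mul ((contV θ).mul ((smCont hf).mul (smCont (smPd1 hg))))) ht
  have hbc : Integrable (fun s => Vpot θ s t * (Vpot θ s t * (pd1 f s t * g s t)) +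
      Vpot θ s t * (Vpot θ s t * (f s t * pd1 g s t))) := hb.add hc
  have hzero := integral_deriv_eq_zero hd (ha.add hbc)
    (decay_tendsto_s_top (((df.mul dg).V_mul θ).V_mul θ) ht)
    (decay_tendsto_s_bot (((df.mul dg).V_mul θ).V_mul θ) ht)
  rw [integral_add ha hbc, integral_add hb hc, integral_const_mul] at hzero
  linear_combination hzero

/-- IBP in `t` on the half line, with vanishing boundary term. -/
lemma slice_t_ibp {f g : ℝ → ℝ → ℝ} (hf : Sm f) (hg : Sm g)
    (df : Decay f) (dg : Decay g) (df2 : Decay (pd2 f)) (dg2 : Decay (pd2 g))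
    (s : ℝ) (hb0 : f s 0 * g s 0 = 0) :
    ∫ t in Ioi (0:ℝ), pd2 f s t * g s t = - ∫ t in Ioi (0:ℝ), f s t * pd2 g s t := by
  have hd : ∀ tt : ℝ, HasDerivAt (fun y => f s y * g s y)
      (pd2 f s tt * g s tt + f s tt * pd2 g s tt) tt :=
    fun tt => (hasDerivAt_pd2 hf s tt).mul (hasDerivAt_pd2 hg s tt)
  have ha : IntegrableOn (fun t => pd2 f s t * g s t) (Ioi (0:ℝ)) :=
    decay_slice_t (df2.mul dg) (by exact (smCont (smPd2 hf)).mul (smCont hg)) s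
  have hb : IntegrableOn (fun t => f s t * pd2 g s t) (Ioi (0:ℝ)) :=
    decay_slice_t (df.mul dg2) (by exact (smCont hf).mul (smCont (smPd2 hg))) s
  have hzero := integral_deriv_Ioi hd (ha.add hb) (decay_tendsto_t_top (df.mul dg) s)
  rw [integral_add ha hb, hb0] at hzero
  linarith

lemma Decay.of_eq {f g : ℝ → ℝ → ℝ} (hf : Decay f) (h : ∀ s t, g s t = f s t) : Decay g :=
  fun n => (hf n).imp fun C hC s t ht => by rw [h]; exact hC s t ht

lemma deriv_eigen {θ σ : ℝ} {u : ℝ → ℝ → ℝ} (hs00 : Sm u) (hs20 : Sm (pd1 (pd1 u)))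
    (hs02 : Sm (pd2 (pd2 u))) {t : ℝ} (heq : ∀ x : ℝ, Hop θ u x t = σ * u x t) (s : ℝ) :
    pd1 (pd2 (pd2 u)) s t =
      -(pd1 (pd1 (pd1 u)) s t) + Vpot θ s t * (Vpot θ s t * pd1 u s t)
        - 2 * Real.sin θ * (Vpot θ s t * u s t) - σ * pd1 u s t := by
  have hφ : (fun x => - pd1 (pd1 u) x t - pd2 (pd2 u) x t + (Vpot θ x t)^2 * u x t - σ * u x t)
      = fun _ : ℝ => (0:ℝ) := by
    funext x
    have h := heq x
    simp only [Hop] at h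
    linarith
  have hd : HasDerivAt
      (fun x => - pd1 (pd1 u) x t - pd2 (pd2 u) x t + (Vpot θ x t)^2 * u x t - σ * u x t)
      (-(pd1 (pd1 (pd1 u)) s t) - pd1 (pd2 (pd2 u)) s t +
        ((2 * Vpot θ s t * -Real.sin θ) * u s t + (Vpot θ s t)^2 * pd1 u s t)
        - σ * pd1 u s t) s := by
    have h1 := hasDerivAt_pd1 hs20 s t
    have h2 := hasDerivAt_pd1 hs02 s t
    have h3 := hasDerivAt_pd1 hs00 s t
    have hV := hasDerivAt_V θ t s
    have hV2 : HasDerivAt (fun x => (Vpot θ x t)^2) (2 * Vpot θ s t * -Real.sin θ) s := by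
      have h4 : HasDerivAt (fun x => (Vpot θ x t)^2) _ s := hV.pow 2
      convert h4 using 1
      push_cast
      ring_nf
    exact ((h1.neg.sub h2).add (hV2.mul h3)).sub (h3.const_mul σ)
  rw [hφ] at hd
  have h0 : (0:ℝ) = -(pd1 (pd1 (pd1 u)) s t) - pd1 (pd2 (pd2 u)) s t +
      ((2 * Vpot θ s t * -Real.sin θ) * u s t + (Vpot θ s t)^2 * pd1 u s t)
      - σ * pd1 u s t := (hasDerivAt_const s (0:ℝ)).unique hd
  linear_combination h0

/-- `∫ V_θ ∂_s u · u = (sin θ)/2` and `∫ V_θ ∂_s²u · u = 0`. -/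
theorem Vds_identities (θ : ℝ) (hθ : θ ∈ Set.Ioo 0 (π/2))
    (u : ℝ → ℝ → ℝ) (σ : ℝ) (hu : IsModelEigen θ u σ) :
    intHalf (fun s t => Vpot θ s t * pd1 u s t * u s t) = Real.sin θ / 2 ∧
    intHalf (fun s t => Vpot θ s t * pd1 (pd1 u) s t * u s t) = 0 := by
  obtain ⟨hθ0, hθ2⟩ := hθ
  have hsin : 0 < Real.sin θ :=
    Real.sin_pos_of_pos_of_lt_pi hθ0 (by linarith [Real.pi_pos])
  -- smoothness of iterated derivatives
  have s00 : Sm u := contDiff_infty.mpr hu.smooth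
  have s10 : Sm (pd1 u) := smPd1 s00
  have s20 : Sm (pd1 (pd1 u)) := smPd1 s10
  have s30 : Sm (pd1 (pd1 (pd1 u))) := smPd1 s20
  have s01 : Sm (pd2 u) := smPd2 s00
  have s11 : Sm (pd1 (pd2 u)) := smPd1 s01
  have s21 : Sm (pd1 (pd1 (pd2 u))) := smPd1 s11
  have s02 : Sm (pd2 (pd2 u)) := smPd2 s01
  have s12 : Sm (pd1 (pd2 (pd2 u))) := smPd1 s02
  -- symmetry of mixed partials
  have c1 : pd2 (pd1 u) = pd1 (pd2 u) := (pdComm s00).symm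
  have c2 : pd2 (pd1 (pd1 u)) = pd1 (pd1 (pd2 u)) := by rw [← pdComm s10, c1]
  have c3 : pd2 (pd1 (pd2 u)) = pd1 (pd2 (pd2 u)) := (pdComm s01).symm
  -- decay of iterated derivatives
  have dk : ∀ k l : ℕ, Decay (pd1^[k] (pd2^[l] u)) := by
    intro k l n
    obtain ⟨C, hC⟩ := hu.schwartz k l n
    refine ⟨C, fun s t ht => ?_⟩
    have h := hC s t ht
    rwa [Real.rpow_neg (le_of_lt (base_pos s t ht)), Real.rpow_natCast,
      ← div_eq_mul_inv] at h
  have d00 : Decay u := dk 0 0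
  have d10 : Decay (pd1 u) := dk 1 0
  have d20 : Decay (pd1 (pd1 u)) := dk 2 0
  have d30 : Decay (pd1 (pd1 (pd1 u))) := dk 3 0
  have d11 : Decay (pd1 (pd2 u)) := dk 1 1
  have d21 : Decay (pd1 (pd1 (pd2 u))) := dk 2 1
  have d12 : Decay (pd1 (pd2 (pd2 u))) := dk 1 2
  -- boundary values
  have hb1 : ∀ s : ℝ, pd1 (pd2 u) s 0 = 0 := by
    intro s
    have h : (fun x => pd2 u x 0) = fun _ : ℝ => (0:ℝ) := funext hu.neumann
    show deriv (fun x => pd2 u x 0) s = 0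
    rw [h]
    exact deriv_const s 0
  -- slice identities in s
  have slice_uu1 : ∀ t : ℝ, 0 ≤ t → (∫ s : ℝ, pd1 u s t * u s t) = 0 :=
    fun t ht => slice_sq s00 d00 d10 ht
  have sliceA : ∀ t : ℝ, 0 ≤ t → (∫ s : ℝ, Vpot θ s t * pd1 u s t * u s t)
      = Real.sin θ / 2 * ∫ s : ℝ, u s t * u s t := by
    intro t ht
    have h := slice_V (θ := θ) s00 s00 d00 d00 d10 d10 ht
    have hc1 : (∫ s : ℝ, Vpot θ s t * pd1 u s t * u s t)
        = ∫ s : ℝ, Vpot θ s t * (pd1 u s t * u s t) := intCongr _ (fun s => by ring)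
    have hc2 : (∫ s : ℝ, Vpot θ s t * (u s t * pd1 u s t))
        = ∫ s : ℝ, Vpot θ s t * (pd1 u s t * u s t) := intCongr _ (fun s => by ring)
    rw [hc2] at h
    rw [hc1]
    linarith
  have sliceB : ∀ t : ℝ, 0 ≤ t → (∫ s : ℝ, Vpot θ s t * pd1 (pd1 u) s t * u s t)
      = - ∫ s : ℝ, Vpot θ s t * (pd1 u s t * pd1 u s t) := by
    intro t ht
    have h := slice_V (θ := θ) s10 s00 d10 d00 d20 d10 ht
    rw [slice_uu1 t ht] at h
    have hc1 : (∫ s : ℝ, Vpot θ s t * pd1 (pd1 u) s t * u s t)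
        = ∫ s : ℝ, Vpot θ s t * (pd1 (pd1 u) s t * u s t) := intCongr _ (fun s => by ring)
    rw [hc1, h]
    ring
  have slice7 : ∀ t : ℝ, 0 ≤ t → (∫ s : ℝ, pd1 (pd2 (pd2 u)) s t * pd1 (pd1 u) s t)
      = 3 * Real.sin θ * ∫ s : ℝ, Vpot θ s t * (pd1 u s t * pd1 u s t) := by
    intro t ht
    have heq : ∀ x : ℝ, Hop θ u x t = σ * u x t := fun x => hu.eigen x t ht
    have hpw : (fun s : ℝ => pd1 (pd2 (pd2 u)) s t * pd1 (pd1 u) s t) =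
        fun s : ℝ => (-1 : ℝ) * (pd1 (pd1 (pd1 u)) s t * pd1 (pd1 u) s t)
          + (Vpot θ s t * (Vpot θ s t * (pd1 (pd1 u) s t * pd1 u s t))
          + ((-2 * Real.sin θ) * (Vpot θ s t * (pd1 (pd1 u) s t * u s t))
          + (-σ) * (pd1 (pd1 u) s t * pd1 u s t))) := by
      funext s
      rw [deriv_eigen s00 s20 s02 heq s]
      ring
    have ia : Integrable (fun s => (-1 : ℝ) * (pd1 (pd1 (pd1 u)) s t * pd1 (pd1 u) s t)) :=
      decay_slice_s ((d30.mul d20).const_mul (-1))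
        (by exact continuous_const.mul ((smCont s30).mul (smCont s20))) ht
    have ib : Integrable (fun s => Vpot θ s t * (Vpot θ s t * (pd1 (pd1 u) s t * pd1 u s t))) :=
      decay_slice_s (((d20.mul d10).V_mul θ).V_mul θ)
        (by exact (contV θ).mul ((contV θ).mul ((smCont s20).mul (smCont s10)))) ht
    have ic : Integrable (fun s => (-2 * Real.sin θ) * (Vpot θ s t * (pd1 (pd1 u) s t * u s t))) :=
      decay_slice_s (((d20.mul d00).V_mul θ).const_mul (-2 * Real.sin θ))
        (by exact continuous_const.mul ((contV θ).mul ((smCont s20).mul (smCont s00)))) ht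
    have id' : Integrable (fun s => (-σ) * (pd1 (pd1 u) s t * pd1 u s t)) :=
      decay_slice_s ((d20.mul d10).const_mul (-σ))
        (by exact continuous_const.mul ((smCont s20).mul (smCont s10))) ht
    have icd : Integrable (fun s => (-2 * Real.sin θ) * (Vpot θ s t * (pd1 (pd1 u) s t * u s t))
        + (-σ) * (pd1 (pd1 u) s t * pd1 u s t)) := ic.add id'
    have ibcd : Integrable (fun s => Vpot θ s t * (Vpot θ s t * (pd1 (pd1 u) s t * pd1 u s t))
        + ((-2 * Real.sin θ) * (Vpot θ s t * (pd1 (pd1 u) s t * u s t))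
          + (-σ) * (pd1 (pd1 u) s t * pd1 u s t))) := ib.add icd
    rw [hpw, integral_add ia ibcd, integral_add ib icd, integral_add ic id',
      integral_const_mul, integral_const_mul, integral_const_mul]
    have T1 : (∫ s : ℝ, pd1 (pd1 (pd1 u)) s t * pd1 (pd1 u) s t) = 0 := slice_sq s20 d20 d30 ht
    have T4 : (∫ s : ℝ, pd1 (pd1 u) s t * pd1 u s t) = 0 := slice_sq s10 d10 d20 ht
    have T3 : (∫ s : ℝ, Vpot θ s t * (pd1 (pd1 u) s t * u s t))
        = - ∫ s : ℝ, Vpot θ s t * (pd1 u s t * pd1 u s t) := by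
      have h := slice_V (θ := θ) s10 s00 d10 d00 d20 d10 ht
      rw [slice_uu1 t ht] at h
      rw [h]
      ring
    have T2 : (∫ s : ℝ, Vpot θ s t * (Vpot θ s t * (pd1 (pd1 u) s t * pd1 u s t)))
        = Real.sin θ * ∫ s : ℝ, Vpot θ s t * (pd1 u s t * pd1 u s t) := by
      have h := slice_V2 (θ := θ) s10 s10 d10 d10 d20 d20 ht
      have hcomm : (∫ s : ℝ, Vpot θ s t * (Vpot θ s t * (pd1 u s t * pd1 (pd1 u) s t)))
          = ∫ s : ℝ, Vpot θ s t * (Vpot θ s t * (pd1 (pd1 u) s t * pd1 u s t)) :=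
        intCongr _ (fun s => by ring)
      rw [hcomm] at h
      linarith
    rw [T1, T2, T3, T4]
    ring
  have slice6 : ∀ t : ℝ, 0 ≤ t → (∫ s : ℝ, pd1 (pd2 u) s t * pd1 (pd1 (pd2 u)) s t) = 0 := by
    intro t ht
    have h := slice_sq s11 d11 d21 ht
    have hc : (∫ s : ℝ, pd1 (pd2 u) s t * pd1 (pd1 (pd2 u)) s t)
        = ∫ s : ℝ, pd1 (pd1 (pd2 u)) s t * pd1 (pd2 u) s t := intCongr _ (fun s => by ring)
    rw [hc, h]
  -- t-integration by parts, per fixed s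
  have tibp : ∀ s : ℝ, (∫ t in Ioi (0:ℝ), pd1 (pd2 (pd2 u)) s t * pd1 (pd1 u) s t)
      = - ∫ t in Ioi (0:ℝ), pd1 (pd2 u) s t * pd1 (pd1 (pd2 u)) s t := by
    intro s
    have h := slice_t_ibp s11 s20 d11 d20 (c3.symm ▸ d12) (c2.symm ▸ d21) s
      (by rw [hb1 s, zero_mul])
    rw [c3, c2] at h
    exact h
  -- swap lemmas for the various integrands
  have dA : Decay (fun s t => Vpot θ s t * pd1 u s t * u s t) :=
    ((d10.mul d00).V_mul θ).of_eq (fun s t => by ring)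
  have swapA := swap_intHalf dA (by exact ((contV θ).mul (smCont s10)).mul (smCont s00))
  have dU2 : Decay (fun s t => u s t * u s t) := d00.mul d00
  have swapU2 := swap_intHalf dU2 (by exact (smCont s00).mul (smCont s00))
  have dX : Decay (fun s t => Vpot θ s t * (pd1 u s t * pd1 u s t)) := (d10.mul d10).V_mul θ
  have swapX := swap_intHalf dX (by exact (contV θ).mul ((smCont s10).mul (smCont s10)))
  have dB : Decay (fun s t => Vpot θ s t * pd1 (pd1 u) s t * u s t) :=
    ((d20.mul d00).V_mul θ).of_eq (fun s t => by ring)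
  have swapB := swap_intHalf dB (by exact ((contV θ).mul (smCont s20)).mul (smCont s00))
  have dD : Decay (fun s t => pd1 (pd2 (pd2 u)) s t * pd1 (pd1 u) s t) := d12.mul d20
  have swapD := swap_intHalf dD (by exact (smCont s12).mul (smCont s20))
  have dE : Decay (fun s t => pd1 (pd2 u) s t * pd1 (pd1 (pd2 u)) s t) := d11.mul d21
  have swapE := swap_intHalf dE (by exact (smCont s11).mul (smCont s21))
  -- part 1
  have part1 : intHalf (fun s t => Vpot θ s t * pd1 u s t * u s t) = Real.sin θ / 2 := by
    rw [swapA]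
    have h1 : (∫ t in Ioi (0:ℝ), ∫ s : ℝ, Vpot θ s t * pd1 u s t * u s t)
        = ∫ t in Ioi (0:ℝ), Real.sin θ / 2 * ∫ s : ℝ, u s t * u s t :=
      setIntegral_congr_fun measurableSet_Ioi (fun t ht => sliceA t (le_of_lt ht))
    rw [h1, integral_const_mul, ← swapU2]
    have h2 : intHalf (fun s t => u s t * u s t) = intHalf (fun s t => (u s t)^2) := by
      unfold intHalf
      exact intCongr _ (fun s => intCongr _ (fun t => by ring))
    rw [h2, hu.normalized, mul_one]
  -- intHalf of u11 * u21 vanishes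
  have hE0 : intHalf (fun s t => pd1 (pd2 u) s t * pd1 (pd1 (pd2 u)) s t) = 0 := by
    rw [swapE]
    have h1 : (∫ t in Ioi (0:ℝ), ∫ s : ℝ, pd1 (pd2 u) s t * pd1 (pd1 (pd2 u)) s t)
        = ∫ t in Ioi (0:ℝ), (0:ℝ) :=
      setIntegral_congr_fun measurableSet_Ioi (fun t ht => slice6 t (le_of_lt ht))
    rw [h1, integral_zero]
  -- intHalf of u12 * u20 vanishes
  have hD0 : intHalf (fun s t => pd1 (pd2 (pd2 u)) s t * pd1 (pd1 u) s t) = 0 := by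
    have h1 : intHalf (fun s t => pd1 (pd2 (pd2 u)) s t * pd1 (pd1 u) s t)
        = ∫ s : ℝ, - ∫ t in Ioi (0:ℝ), pd1 (pd2 u) s t * pd1 (pd1 (pd2 u)) s t := by
      unfold intHalf
      exact intCongr _ (fun s => tibp s)
    rw [h1, integral_neg]
    have h2 : (∫ s : ℝ, ∫ t in Ioi (0:ℝ), pd1 (pd2 u) s t * pd1 (pd1 (pd2 u)) s t)
        = intHalf (fun s t => pd1 (pd2 u) s t * pd1 (pd1 (pd2 u)) s t) := rfl
    rw [h2, hE0, neg_zero]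
  -- X = 0
  have hX0 : intHalf (fun s t => Vpot θ s t * (pd1 u s t * pd1 u s t)) = 0 := by
    have h3 : (0:ℝ) = 3 * Real.sin θ
        * intHalf (fun s t => Vpot θ s t * (pd1 u s t * pd1 u s t)) := by
      rw [← hD0, swapD, swapX]
      have h4 : (∫ t in Ioi (0:ℝ), ∫ s : ℝ, pd1 (pd2 (pd2 u)) s t * pd1 (pd1 u) s t)
          = ∫ t in Ioi (0:ℝ), 3 * Real.sin θ * ∫ s : ℝ, Vpot θ s t * (pd1 u s t * pd1 u s t) :=
        setIntegral_congr_fun measurableSet_Ioi (fun t ht => slice7 t (le_of_lt ht))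
      rw [h4, integral_const_mul]
    have hs3 : (3 : ℝ) * Real.sin θ ≠ 0 := ne_of_gt (mul_pos (by norm_num) hsin)
    exact ((mul_eq_zero.mp h3.symm).resolve_left hs3)
  -- part 2
  have part2 : intHalf (fun s t => Vpot θ s t * pd1 (pd1 u) s t * u s t) = 0 := by
    have h1 : intHalf (fun s t => Vpot θ s t * pd1 (pd1 u) s t * u s t)
        = - intHalf (fun s t => Vpot θ s t * (pd1 u s t * pd1 u s t)) := by
      rw [swapB, swapX]
      have h4 : (∫ t in Ioi (0:ℝ), ∫ s : ℝ, Vpot θ s t * pd1 (pd1 u) s t * u s t)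
          = ∫ t in Ioi (0:ℝ), - ∫ s : ℝ, Vpot θ s t * (pd1 u s t * pd1 u s t) :=
        setIntegral_congr_fun measurableSet_Ioi (fun t ht => sliceB t (le_of_lt ht))
      rw [h4, integral_neg]
    rw [h1, hX0, neg_zero]
  exact ⟨part1, part2⟩
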